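/- arXiv:2212.06818 — 2 statements merged into one kernel-verified Lean document; each statement's English description precedes it below -/
import Mathlib

section
/- Let 𝒜 ∈ Sp(2d,ℝ) (a 4d×4d symplectic matrix with d×d blocks A_{ij}, i,j = 1,…,4). Then 𝒜 satisfies 𝒜·(z₁, z₁, z₂, −z₂) = (z₁, z₂, 0, 0) for all z₁, z₂ ∈ ℝ^d if and only if its block decomposition has the form: first row (A₁₁, I−A₁₁, A₁₃, A₁₃), second row (A₂₁, −A₂₁, I−A₁₁ᵀ, −A₁₁ᵀ), third row (0, 0, I, I), fourth row (−I, I, 0, 0), with A₁₃ = A₁₃ᵀ and A₂₁ = A₂₁ᵀ. -/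
open Matrix

private lemma covariant_aux {d : ℕ} {M N : Matrix (Fin d) (Fin d) ℝ}
    (h : ∀ v, M.mulVec v = N.mulVec v) : M = N := by
  ext i j
  simpa [Matrix.mulVec_single] using congrFun (h (Pi.single j 1)) i

/-- Characterization of covariant symplectic matrices: a symplectic `4d×4d` matrix `𝒜`
satisfies `𝒜·(z₁, z₁, z₂, −z₂) = (z₁, z₂, 0, 0)` for all `z₁, z₂ ∈ ℝ^d` iff its block
decomposition has the form with rows `(A₁₁, I−A₁₁, A₁₃, A₁₃)`, `(A₂₁, −A₂₁, I−A₁₁ᵀ, −A₁₁ᵀ)`,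
`(0, 0, I, I)`, `(−I, I, 0, 0)`, with `A₁₃` and `A₂₁` symmetric. -/
theorem covariant_characterization (d : ℕ)
    (A11 A12 A13 A14 A21 A22 A23 A24 A31 A32 A33 A34 A41 A42 A43 A44 :
      Matrix (Fin d) (Fin d) ℝ)
    (hsymp : (Matrix.fromBlocks
        (Matrix.fromBlocks A11 A12 A21 A22) (Matrix.fromBlocks A13 A14 A23 A24)
        (Matrix.fromBlocks A31 A32 A41 A42) (Matrix.fromBlocks A33 A34 A43 A44))ᵀ *
      (Matrix.fromBlocks 0 1 (-1) 0 :
        Matrix ((Fin d ⊕ Fin d) ⊕ (Fin d ⊕ Fin d)) ((Fin d ⊕ Fin d) ⊕ (Fin d ⊕ Fin d)) ℝ) *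
      Matrix.fromBlocks
        (Matrix.fromBlocks A11 A12 A21 A22) (Matrix.fromBlocks A13 A14 A23 A24)
        (Matrix.fromBlocks A31 A32 A41 A42) (Matrix.fromBlocks A33 A34 A43 A44) =
      Matrix.fromBlocks 0 1 (-1) 0) :
    (∀ z₁ z₂ : Fin d → ℝ,
        (Matrix.fromBlocks
          (Matrix.fromBlocks A11 A12 A21 A22) (Matrix.fromBlocks A13 A14 A23 A24)
          (Matrix.fromBlocks A31 A32 A41 A42)
          (Matrix.fromBlocks A33 A34 A43 A44)).mulVec
            (Sum.elim (Sum.elim z₁ z₁) (Sum.elim z₂ (-z₂))) =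
          Sum.elim (Sum.elim z₁ z₂) (Sum.elim 0 0)) ↔
      (A12 = 1 - A11 ∧ A14 = A13 ∧ A22 = -A21 ∧ A23 = 1 - A11ᵀ ∧ A24 = -A11ᵀ ∧
        A31 = 0 ∧ A32 = 0 ∧ A33 = 1 ∧ A34 = 1 ∧
        A41 = -1 ∧ A42 = 1 ∧ A43 = 0 ∧ A44 = 0 ∧
        A13ᵀ = A13 ∧ A21ᵀ = A21) := by
  constructor
  · intro h
    -- Extract the linear conditions from the covariance hypothesis.
    have E1 : A11 + A12 = 1 := covariant_aux fun v => funext fun i => by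
      have := congrFun (h v 0) (Sum.inl (Sum.inl i))
      simpa [Matrix.fromBlocks_mulVec, Matrix.add_mulVec, Matrix.sub_mulVec] using this
    have E2 : A21 + A22 = 0 := covariant_aux fun v => funext fun i => by
      have := congrFun (h v 0) (Sum.inl (Sum.inr i))
      simpa [Matrix.fromBlocks_mulVec, Matrix.add_mulVec, Matrix.sub_mulVec] using this
    have E3 : A31 + A32 = 0 := covariant_aux fun v => funext fun i => by
      have := congrFun (h v 0) (Sum.inr (Sum.inl i))
      simpa [Matrix.fromBlocks_mulVec, Matrix.add_mulVec, Matrix.sub_mulVec] using this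
    have E4 : A41 + A42 = 0 := covariant_aux fun v => funext fun i => by
      have := congrFun (h v 0) (Sum.inr (Sum.inr i))
      simpa [Matrix.fromBlocks_mulVec, Matrix.add_mulVec, Matrix.sub_mulVec] using this
    have E5 : A13 - A14 = 0 := covariant_aux fun v => funext fun i => by
      have := congrFun (h 0 v) (Sum.inl (Sum.inl i))
      simpa [Matrix.fromBlocks_mulVec, Matrix.add_mulVec, Matrix.sub_mulVec,
        Matrix.mulVec_neg, Matrix.neg_mulVec, sub_eq_add_neg] using this
    have E6 : A23 - A24 = 1 := covariant_aux fun v => funext fun i => by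
      have := congrFun (h 0 v) (Sum.inl (Sum.inr i))
      simpa [Matrix.fromBlocks_mulVec, Matrix.add_mulVec, Matrix.sub_mulVec,
        Matrix.mulVec_neg, Matrix.neg_mulVec, sub_eq_add_neg] using this
    have E7 : A33 - A34 = 0 := covariant_aux fun v => funext fun i => by
      have := congrFun (h 0 v) (Sum.inr (Sum.inl i))
      simpa [Matrix.fromBlocks_mulVec, Matrix.add_mulVec, Matrix.sub_mulVec,
        Matrix.mulVec_neg, Matrix.neg_mulVec, sub_eq_add_neg] using this
    have E8 : A43 - A44 = 0 := covariant_aux fun v => funext fun i => by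
      have := congrFun (h 0 v) (Sum.inr (Sum.inr i))
      simpa [Matrix.fromBlocks_mulVec, Matrix.add_mulVec, Matrix.sub_mulVec,
        Matrix.mulVec_neg, Matrix.neg_mulVec, sub_eq_add_neg] using this
    have hA12 : A12 = 1 - A11 := by linear_combination (norm := noncomm_ring) E1
    have hA22 : A22 = -A21 := by linear_combination (norm := noncomm_ring) E2
    have hA32 : A32 = -A31 := by linear_combination (norm := noncomm_ring) E3
    have hA42 : A42 = -A41 := by linear_combination (norm := noncomm_ring) E4
    have hA14 : A13 = A14 := by linear_combination (norm := noncomm_ring) E5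
    have hA24 : A24 = A23 - 1 := by linear_combination (norm := noncomm_ring) -E6
    have hA34 : A33 = A34 := by linear_combination (norm := noncomm_ring) E7
    have hA44 : A43 = A44 := by linear_combination (norm := noncomm_ring) E8
    subst hA12 hA22 hA32 hA42 hA14 hA24 hA34 hA44
    -- Decompose the symplectic condition into block equations.
    simp only [Matrix.fromBlocks_transpose, Matrix.fromBlocks_multiply, Matrix.fromBlocks_inj,
      Matrix.zero_mul, Matrix.mul_zero, Matrix.one_mul, Matrix.mul_one, Matrix.neg_mul,
      Matrix.mul_neg, zero_add, add_zero, Matrix.transpose_neg, Matrix.transpose_zero,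
      Matrix.transpose_one, Matrix.transpose_sub, Matrix.transpose_add,
      Matrix.fromBlocks_neg, Matrix.fromBlocks_add,
      ← Matrix.fromBlocks_zero, ← Matrix.fromBlocks_one] at hsymp
    obtain ⟨⟨h1,h2,h3,h4⟩,⟨h5,h6,h7,h8⟩,⟨h9,h10,h11,h12⟩,⟨h13,h14,h15,h16⟩⟩ := hsymp
    have hA41 : A41 = -1 := by
      have e : A41ᵀ = -1 := by linear_combination (norm := noncomm_ring) h6 - h5
      simpa using congrArg Matrix.transpose e
    have hA31 : A31 = 0 := by
      have e : A31ᵀ = 0 := by linear_combination (norm := noncomm_ring) -h1 - h2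
      simpa using congrArg Matrix.transpose e
    subst hA41 hA31
    simp only [Matrix.transpose_neg, Matrix.transpose_zero, Matrix.transpose_one] at h1 h5 h7 h13 h14
    have hA21 : A21ᵀ = A21 := by linear_combination (norm := noncomm_ring) -h1
    have hA43 : A43 = 0 := by
      have e : A43ᵀ = 0 := by linear_combination (norm := noncomm_ring) h14 - h13
      simpa using congrArg Matrix.transpose e
    subst hA43
    simp only [Matrix.transpose_zero] at h5 h7 h13
    have hA33 : A33 = 1 := by linear_combination (norm := noncomm_ring) h5 + h7
    subst hA33
    have hA23 : A23 = 1 - A11ᵀ := by linear_combination (norm := noncomm_ring) h5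
    subst hA23
    simp only [Matrix.transpose_one] at h13
    have hA13 : A13ᵀ = A13 := by linear_combination (norm := noncomm_ring) h13
    refine ⟨rfl, rfl, rfl, rfl, by abel, rfl, by simp, rfl, rfl, rfl, by simp, rfl, rfl,
      hA13, hA21⟩
  · rintro ⟨h12, h14, h22, h23, h24, h31, h32, h33, h34, h41, h42, h43, h44, h13s, h21s⟩
    subst h12 h14 h22 h23 h24 h31 h32 h33 h34 h41 h42 h43 h44
    intro z₁ z₂
    funext i
    rcases i with (i | i) | (i | i) <;>
      simp [Matrix.fromBlocks_mulVec, Matrix.add_mulVec, Matrix.sub_mulVec,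
        Matrix.neg_mulVec, Matrix.mulVec_neg, Matrix.one_mulVec, Matrix.zero_mulVec]
end

section
/- Let 𝒜 ∈ Sp(2d,ℝ) be covariant, i.e., with block decomposition: row 1 = (A₁₁, I−A₁₁, A₁₃, A₁₃), row 2 = (A₂₁, −A₂₁, I−A₁₁ᵀ, −A₁₁ᵀ), row 3 = (0, 0, I, I), row 4 = (−I, I, 0, 0), where A₁₃ and A₂₁ are symmetric. Then 𝒜 = V_{B_𝒜}ᵀ · A_{1/2}, where B_𝒜 = [[A₁₃, ½I − A₁₁], [½I − A₁₁ᵀ, −A₂₁]] and A_{1/2} is the symplectic matrix of the classical Wigner distribution (the matrix A_τ with τ = 1/2), and V_B = [[I_{2d}, 0], [B, I_{2d}]]. -/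
open Matrix

/-- A covariant symplectic matrix `𝒜` factors as `V_{B_𝒜}ᵀ · A_{1/2}`, where
`B_𝒜 = [[A₁₃, ½I − A₁₁], [½I − A₁₁ᵀ, −A₂₁]]` and `A_{1/2}` is the symplectic matrix of
the classical Wigner distribution. -/
theorem covariant_factorization (d : ℕ) (A11 A13 A21 : Matrix (Fin d) (Fin d) ℝ)
    (hA13 : A13ᵀ = A13) (hA21 : A21ᵀ = A21) :
    Matrix.fromBlocks
        (Matrix.fromBlocks A11 (1 - A11) A21 (-A21))
        (Matrix.fromBlocks A13 A13 (1 - A11ᵀ) (-A11ᵀ))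
        (Matrix.fromBlocks 0 0 (-1) 1)
        (Matrix.fromBlocks 1 1 0 0) =
      (Matrix.fromBlocks 1
          (Matrix.fromBlocks A13 ((1/2 : ℝ) • 1 - A11) ((1/2 : ℝ) • 1 - A11ᵀ) (-A21)) 0 1 :
        Matrix ((Fin d ⊕ Fin d) ⊕ (Fin d ⊕ Fin d)) ((Fin d ⊕ Fin d) ⊕ (Fin d ⊕ Fin d)) ℝ) *
        Matrix.fromBlocks
          (Matrix.fromBlocks ((1/2 : ℝ) • (1 : Matrix (Fin d) (Fin d) ℝ))
            ((1/2 : ℝ) • 1) 0 0)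
          (Matrix.fromBlocks 0 0 ((1/2 : ℝ) • 1) (-((1/2 : ℝ) • 1)))
          (Matrix.fromBlocks 0 0 (-1) 1)
          (Matrix.fromBlocks 1 1 0 0) := by
  simp only [Matrix.fromBlocks_multiply, Matrix.fromBlocks_add, Matrix.mul_one, Matrix.one_mul,
    Matrix.mul_zero, Matrix.zero_mul, add_zero, zero_add, Matrix.neg_mul,
    Matrix.mul_neg, Matrix.smul_mul, Matrix.mul_smul]
  ext ((i|i)|(i|i)) ((j|j)|(j|j)) <;>
    simp [Matrix.add_apply, Matrix.sub_apply, Matrix.smul_apply, Matrix.neg_apply,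
      Matrix.one_apply, Matrix.fromBlocks] <;> ring_nf <;> try (split <;> ring)
end
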